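/- Let 0 < D_m < D_n and N > 0. The function φ(x) = D_n·e^(N/D_n)·x^(D_m/(D_n - D_m)) - D_m·x^(D_n/(D_n - D_m)) is monotonically decreasing on the interval [e^(N/D_n), e^(N/D_m)]. -/

import Mathlib

theorem stmt_5 (Dm Dn N : ℝ) (hDm : 0 < Dm) (hDmn : Dm < Dn) (hN : 0 < N) :
    AntitoneOn
      (fun x : ℝ => Dn * Real.exp (N / Dn) * x ^ (Dm / (Dn - Dm))
        - Dm * x ^ (Dn / (Dn - Dm)))
      (Set.Icc (Real.exp (N / Dn)) (Real.exp (N / Dm))) := by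
  have hd : 0 < Dn - Dm := sub_pos.mpr hDmn
  set E := Real.exp (N / Dn) with hE
  have hE0 : 0 < E := Real.exp_pos _
  set a := Dm / (Dn - Dm) with ha
  set b := Dn / (Dn - Dm) with hb
  apply antitoneOn_of_deriv_nonpos (convex_Icc _ _)
  · apply ContinuousOn.sub
    · exact continuousOn_const.mul (continuousOn_id.rpow_const
        (fun x hx => Or.inl (ne_of_gt (lt_of_lt_of_le hE0 hx.1))))
    · exact continuousOn_const.mul (continuousOn_id.rpow_const
        (fun x hx => Or.inl (ne_of_gt (lt_of_lt_of_le hE0 hx.1))))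
  · rw [interior_Icc]
    intro x hx
    have hx0 : 0 < x := lt_trans hE0 hx.1
    exact (((Real.hasDerivAt_rpow_const (Or.inl (ne_of_gt hx0))).const_mul
      (Dn * E)).sub ((Real.hasDerivAt_rpow_const
      (Or.inl (ne_of_gt hx0))).const_mul Dm)).differentiableAt.differentiableWithinAt
  · rw [interior_Icc]
    intro x hx
    have hx0 : 0 < x := lt_trans hE0 hx.1
    have hder : HasDerivAt (fun x : ℝ => Dn * E * x ^ a - Dm * x ^ b)
        (Dn * E * (a * x ^ (a - 1)) - Dm * (b * x ^ (b - 1))) x :=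
      ((Real.hasDerivAt_rpow_const (Or.inl (ne_of_gt hx0))).const_mul
        (Dn * E)).sub ((Real.hasDerivAt_rpow_const (Or.inl (ne_of_gt hx0))).const_mul Dm)
    rw [hder.deriv]
    have hba : b = a + 1 := by
      rw [ha, hb, div_add_one (ne_of_gt hd)]; ring
    have hxb : x ^ (b - 1) = x * x ^ (a - 1) := by
      rw [hba]
      rw [show a + 1 - 1 = (a - 1) + 1 by ring, Real.rpow_add hx0]
      rw [Real.rpow_one]; ring
    have hc : Dn * a = Dm * b := by
      field_simp [ha, hb]
      ring
    have hpow : 0 < x ^ (a - 1) := Real.rpow_pos_of_pos hx0 _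
    have hle : E ≤ x := le_of_lt hx.1
    rw [hxb]
    have : Dn * E * (a * x ^ (a - 1)) ≤ Dm * (b * (x * x ^ (a - 1))) := by
      have h1 : Dn * E * (a * x ^ (a - 1)) = (Dn * a) * (E * x ^ (a - 1)) := by ring
      have h2 : Dm * (b * (x * x ^ (a - 1))) = (Dm * b) * (x * x ^ (a - 1)) := by ring
      rw [h1, h2, ← hc]
      have hDna : 0 < Dn * a :=
        mul_pos (lt_trans hDm hDmn) (div_pos hDm hd)
      exact mul_le_mul_of_nonneg_left
        (mul_le_mul_of_nonneg_right hle (le_of_lt hpow)) (le_of_lt hDna)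
    linarith
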